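/- Let G be a finite group acting on a finite set Ω such that G is a normal subgroup of some group X acting transitively on Ω. Then for every g ∈ G and every ω ∈ Ω, the fixed-point ratio satisfies fpr_Ω(g) = |Fix_Ω(g)|/|Ω| ≤ |G_ω| · |C_G(g)| / |G|. -/

import Mathlib

open Finset MulAction Pointwise

private lemma aux_fiber {X : Type*} [Group X] [Finite X] (G S : Subgroup X)
    (g : X) (hg : g ∈ G) :
    Nat.card {x : X // x ∈ G ∧ x * g * x⁻¹ ∈ S} ≤
      Nat.card ↥(S ⊓ G) * Nat.card ↥(Subgroup.centralizer {g} ⊓ G) := by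
  classical
  have hmem : ∀ x : {x : X // x ∈ G ∧ x * g * x⁻¹ ∈ S},
      (x : X) * g * (x : X)⁻¹ ∈ S ⊓ G := fun x =>
    Subgroup.mem_inf.2 ⟨x.2.2, G.mul_mem (G.mul_mem x.2.1 hg) (G.inv_mem x.2.1)⟩
  let f : {x : X // x ∈ G ∧ x * g * x⁻¹ ∈ S} → ↥(S ⊓ G) := fun x => ⟨_, hmem x⟩
  let r : ↥(S ⊓ G) → X := fun v =>
    if h : ∃ x : {x : X // x ∈ G ∧ x * g * x⁻¹ ∈ S}, f x = v
    then ↑(Classical.choose h) else 1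
  have hr : ∀ x : {x : X // x ∈ G ∧ x * g * x⁻¹ ∈ S},
      r (f x) ∈ G ∧ r (f x) * g * (r (f x))⁻¹ = (x : X) * g * (x : X)⁻¹ := by
    intro x
    have hex : ∃ y : {x : X // x ∈ G ∧ x * g * x⁻¹ ∈ S}, f y = f x := ⟨x, rfl⟩
    have hrr : r (f x) = ↑(Classical.choose hex) := dif_pos hex
    have hspec := Classical.choose_spec hex
    have hval : ((Classical.choose hex : {x : X // x ∈ G ∧ x * g * x⁻¹ ∈ S}) : X) * g *
        ((Classical.choose hex : {x : X // x ∈ G ∧ x * g * x⁻¹ ∈ S}) : X)⁻¹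
        = (x : X) * g * (x : X)⁻¹ := congrArg Subtype.val hspec
    rw [hrr]
    exact ⟨(Classical.choose hex).2.1, hval⟩
  have hΦmem : ∀ x : {x : X // x ∈ G ∧ x * g * x⁻¹ ∈ S},
      (r (f x))⁻¹ * (x : X) ∈ Subgroup.centralizer {g} ⊓ G := by
    intro x
    obtain ⟨h1, h2⟩ := hr x
    refine Subgroup.mem_inf.2
      ⟨Subgroup.mem_centralizer_iff.2 ?_, G.mul_mem (G.inv_mem h1) x.2.1⟩
    intro h hh
    rw [Set.mem_singleton_iff] at hh; subst hh
    have h3 := congrArg (fun y => (r (f x))⁻¹ * y * (x : X)) h2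
    simpa [mul_assoc] using h3
  let Φ : {x : X // x ∈ G ∧ x * g * x⁻¹ ∈ S} →
      ↥(S ⊓ G) × ↥(Subgroup.centralizer {g} ⊓ G) :=
    fun x => (f x, ⟨_, hΦmem x⟩)
  have hinj : Function.Injective Φ := by
    intro x y h
    have h1 : f x = f y := congrArg Prod.fst h
    have h2 : (r (f x))⁻¹ * (x : X) = (r (f y))⁻¹ * (y : X) :=
      congrArg (fun p => ((p.2 : ↥(Subgroup.centralizer {g} ⊓ G)) : X)) h
    rw [h1] at h2
    exact Subtype.ext (mul_left_cancel h2)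
  calc Nat.card {x : X // x ∈ G ∧ x * g * x⁻¹ ∈ S}
      ≤ Nat.card (↥(S ⊓ G) × ↥(Subgroup.centralizer {g} ⊓ G)) :=
        Nat.card_le_card_of_injective Φ hinj
    _ = _ := Nat.card_prod _ _

/-- If `G` is a normal subgroup of a group `X` acting transitively on a finite set `Ω`,
then for `g ∈ G` and `ω ∈ Ω` the fixed-point ratio of `g` on `Ω` is at most
`|G_ω| · |C_G(g)| / |G|`. -/
theorem fpr_le_of_normal_in_transitive
    (X Ω : Type*) [Group X] [Finite X] [Finite Ω] [MulAction X Ω]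
    [MulAction.IsPretransitive X Ω]
    (G : Subgroup X) [G.Normal] (g : X) (hg : g ∈ G) (ω : Ω) :
    (Nat.card {ω' : Ω // g • ω' = ω'} : ℚ) / Nat.card Ω ≤
      (Nat.card ↥(MulAction.stabilizer X ω ⊓ G) *
        Nat.card ↥(Subgroup.centralizer {g} ⊓ G) : ℚ) / Nat.card G := by
  classical
  haveI : Fintype Ω := Fintype.ofFinite Ω
  haveI : Fintype X := Fintype.ofFinite X
  haveI : Nonempty Ω := ⟨ω⟩
  -- all point stabilizers (intersected with G) have the same cardinality
  have stab_eq : ∀ ω' : Ω, Nat.card ↥(MulAction.stabilizer X ω' ⊓ G)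
      = Nat.card ↥(MulAction.stabilizer X ω ⊓ G) := by
    intro ω'
    obtain ⟨t, ht⟩ := MulAction.exists_smul_eq X ω ω'
    have hGmap : G.map (MulAut.conj t).toMonoidHom = G := by
      have h := Subgroup.Normal.conj_smul_eq_self t G
      rwa [Subgroup.pointwise_smul_def] at h
    have hinj : Function.Injective ⇑(MulAut.conj t).toMonoidHom :=
      (MulAut.conj t).injective
    conv_lhs => rw [← ht, MulAction.stabilizer_smul_eq_stabilizer_map_conj, ← hGmap,
      ← Subgroup.map_inf _ _ _ hinj]
    exact (Nat.card_congr
      (Subgroup.equivMapOfInjective _ _ hinj).toEquiv).symm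
  -- the key counting inequality
  have key : Nat.card {ω' : Ω // g • ω' = ω'} * Nat.card G ≤
      Nat.card ↥(MulAction.stabilizer X ω ⊓ G) *
        Nat.card ↥(Subgroup.centralizer {g} ⊓ G) * Nat.card Ω := by
    set P : Finset (X × Ω) :=
      Finset.univ.filter fun p => p.1 ∈ G ∧ (p.1 * g * p.1⁻¹) • p.2 = p.2 with hP
    -- column count: fibers over the second coordinate
    have hcol : P.card ≤ Nat.card ↥(MulAction.stabilizer X ω ⊓ G) *
        Nat.card ↥(Subgroup.centralizer {g} ⊓ G) * Nat.card Ω := by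
      rw [Finset.card_eq_sum_card_fiberwise (f := Prod.snd) (t := Finset.univ)
        (fun _ _ => Finset.mem_univ _)]
      have hpt : ∀ ω' : Ω, (P.filter fun p => p.2 = ω').card ≤
          Nat.card ↥(MulAction.stabilizer X ω ⊓ G) *
            Nat.card ↥(Subgroup.centralizer {g} ⊓ G) := by
        intro ω'
        have h1 : (P.filter fun p => p.2 = ω').card =
            (Finset.univ.filter fun x : X => x ∈ G ∧ (x * g * x⁻¹) • ω' = ω').card := by
          apply Finset.card_nbij' (fun p => p.1) (fun x => (x, ω'))
          · intro p hp
            simp only [hP, Finset.mem_coe, Finset.mem_filter, Finset.mem_univ, true_and] at hp ⊢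
            obtain ⟨⟨hpg, hfix⟩, hsnd⟩ := hp
            subst hsnd
            exact ⟨hpg, hfix⟩
          · intro x hx
            simp only [Finset.mem_coe, Finset.mem_filter, Finset.mem_univ, true_and] at hx
            simp only [hP, Finset.mem_coe, Finset.mem_filter, Finset.mem_univ, true_and]
            exact ⟨hx, trivial⟩
          · intro p hp
            simp only [hP, Finset.mem_coe, Finset.mem_filter, Finset.mem_univ, true_and] at hp
            obtain ⟨-, hsnd⟩ := hp
            rw [← hsnd]
          · intro x _
            rfl
        have h2 : (Finset.univ.filter fun x : X => x ∈ G ∧ (x * g * x⁻¹) • ω' = ω').card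
            = Nat.card {x : X // x ∈ G ∧ x * g * x⁻¹ ∈ MulAction.stabilizer X ω'} := by
          rw [Nat.card_eq_fintype_card, Fintype.card_subtype]
          simp [MulAction.mem_stabilizer_iff]
        rw [h1, h2, ← stab_eq ω']
        exact aux_fiber G _ g hg
      calc ∑ ω' : Ω, (P.filter fun p => p.2 = ω').card
          ≤ ∑ _ω' : Ω, (Nat.card ↥(MulAction.stabilizer X ω ⊓ G) *
              Nat.card ↥(Subgroup.centralizer {g} ⊓ G)) :=
            Finset.sum_le_sum fun ω' _ => hpt ω'
        _ = _ := by
            rw [Finset.sum_const, Finset.card_univ, smul_eq_mul,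
              Nat.card_eq_fintype_card (α := Ω), mul_comm]
    -- row count: fibers over the first coordinate
    have hrow : P.card = Nat.card {ω' : Ω // g • ω' = ω'} * Nat.card G := by
      rw [Finset.card_eq_sum_card_fiberwise (f := Prod.fst) (t := Finset.univ)
        (fun _ _ => Finset.mem_univ _)]
      have hx : ∀ x : X, (P.filter fun p => p.1 = x).card =
          if x ∈ G then (Finset.univ.filter fun ω'' : Ω => g • ω'' = ω'').card else 0 := by
        intro x
        by_cases hxG : x ∈ G
        · rw [if_pos hxG]
          apply Finset.card_nbij' (fun p => x⁻¹ • p.2) (fun ω'' => (x, x • ω''))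
          · intro p hp
            simp only [hP, Finset.mem_coe, Finset.mem_filter, Finset.mem_univ, true_and] at hp ⊢
            obtain ⟨⟨-, hfix⟩, hfst⟩ := hp
            subst hfst
            rw [smul_smul]
            have hgx : g * p.1⁻¹ = p.1⁻¹ * (p.1 * g * p.1⁻¹) := by group
            rw [hgx, mul_smul, hfix]
          · intro ω'' hω
            simp only [Finset.mem_coe, Finset.mem_filter, Finset.mem_univ, true_and] at hω
            simp only [hP, Finset.mem_coe, Finset.mem_filter, Finset.mem_univ, true_and]
            refine ⟨⟨hxG, ?_⟩, trivial⟩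
            rw [mul_smul, mul_smul, inv_smul_smul, hω]
          · intro p hp
            simp only [hP, Finset.mem_coe, Finset.mem_filter, Finset.mem_univ, true_and] at hp
            obtain ⟨-, hfst⟩ := hp
            dsimp only
            rw [smul_inv_smul, ← hfst]
          · intro ω'' _
            simp
        · rw [if_neg hxG, Finset.card_eq_zero]
          ext p
          simp only [hP, Finset.mem_filter, Finset.mem_univ, true_and,
            Finset.notMem_empty, iff_false]
          rintro ⟨⟨hpG, -⟩, rfl⟩
          exact hxG hpG
      rw [Finset.sum_congr rfl fun x _ => hx x, ← Finset.sum_filter,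
        Finset.sum_const, smul_eq_mul,
        Nat.card_eq_fintype_card (α := {ω' : Ω // g • ω' = ω'}), Fintype.card_subtype,
        Nat.card_eq_fintype_card (α := ↥G), Fintype.card_subtype, mul_comm]
    rw [← hrow]
    exact hcol
  have hΩpos : (0 : ℚ) < Nat.card Ω := by exact_mod_cast Nat.card_pos
  have hGpos : (0 : ℚ) < Nat.card G := by exact_mod_cast Nat.card_pos
  rw [div_le_div_iff₀ hΩpos hGpos]
  exact_mod_cast key
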